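/- The eulerian magnitude differential squares to zero: for all k ≥ 2 and ℓ ≥ 0, the composition ∂_{k,ℓ} ∘ ∂_{k+1,ℓ} : EMC_{k+1,ℓ}(G) → EMC_{k-1,ℓ}(G) is the zero map. -/

import Mathlib

set_option linter.unusedSectionVars false
set_option maxHeartbeats 1000000


variable {V : Type*} [Fintype V] [DecidableEq V]

/-- The length of a trail `(x_0, ..., x_k)`: the sum of consecutive path-metric distances. -/
noncomputable def trailLen (G : SimpleGraph V) {k : ℕ} (x : Fin (k + 1) → V) : ℕ :=
  ∑ i : Fin k, G.dist (x i.castSucc) (x i.succ)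

/-- `(x_0,...,x_k)` is an eulerian trail of length `ℓ`: pairwise distinct landmarks, finite
consecutive distances, total length `ℓ`. -/
def IsEulerian (G : SimpleGraph V) {k : ℕ} (ℓ : ℕ) (x : Fin (k + 1) → V) : Prop :=
  Function.Injective x ∧ (∀ i : Fin k, G.Reachable (x i.castSucc) (x i.succ)) ∧
    trailLen G x = ℓ

/-- The eulerian magnitude chain group `EMC_{k,ℓ}(G)`. -/
abbrev EMC (G : SimpleGraph V) (k ℓ : ℕ) : Type _ :=
  FreeAbelianGroup {x : Fin (k + 1) → V // IsEulerian G ℓ x}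

open Classical in
/-- The eulerian magnitude differential `∂_{k+1,ℓ} : EMC_{k+1,ℓ}(G) → EMC_{k,ℓ}(G)`,
the alternating sum over interior indices `0 < i < k+1` of the maps omitting the `i`-th
landmark when the resulting tuple still has length `ℓ` (and `0` otherwise). -/
noncomputable def bdry (G : SimpleGraph V) (k ℓ : ℕ) : EMC G (k + 1) ℓ →+ EMC G k ℓ :=
  FreeAbelianGroup.lift fun x : {x : Fin (k + 2) → V // IsEulerian G ℓ x} =>
    ∑ i : Fin (k + 2),
      if 0 < (i : ℕ) ∧ (i : ℕ) < k + 1 then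
        (if h : IsEulerian G ℓ (x.1 ∘ i.succAbove) then
          ((-1 : ℤ) ^ (i : ℕ)) •
            FreeAbelianGroup.of (⟨x.1 ∘ i.succAbove, h⟩ : {y : Fin (k + 1) → V // IsEulerian G ℓ y})
        else 0)
      else 0

open Classical in
lemma bdry_of (G : SimpleGraph V) (k ℓ : ℕ) (x : {x : Fin (k + 2) → V // IsEulerian G ℓ x}) :
    bdry G k ℓ (FreeAbelianGroup.of x) =
    ∑ i : Fin (k + 2),
      if 0 < (i : ℕ) ∧ (i : ℕ) < k + 1 then
        (if h : IsEulerian G ℓ (x.1 ∘ i.succAbove) then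
          ((-1 : ℤ) ^ (i : ℕ)) •
            FreeAbelianGroup.of (⟨x.1 ∘ i.succAbove, h⟩ : {y : Fin (k + 1) → V // IsEulerian G ℓ y})
        else 0)
      else 0 :=
  FreeAbelianGroup.lift_apply_of _ _
lemma emc_dist_tri (G : SimpleGraph V) {u v w : V} (h1 : G.Reachable u v)
    (h2 : G.Reachable v w) : G.dist u w ≤ G.dist u v + G.dist v w := by
  obtain ⟨p, hp⟩ := h1.exists_walk_length_eq_dist
  obtain ⟨q, hq⟩ := h2.exists_walk_length_eq_dist
  rw [← hp, ← hq, ← SimpleGraph.Walk.length_append]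
  exact SimpleGraph.dist_le _

lemma emc_val_succAbove {n : ℕ} (i : Fin (n + 1)) (j : Fin n) :
    ((i.succAbove j : Fin (n + 1)) : ℕ) = if (j : ℕ) < (i : ℕ) then (j : ℕ) else (j : ℕ) + 1 := by
  rcases lt_or_ge (j.castSucc) i with h | h
  · rw [Fin.succAbove_of_castSucc_lt _ _ h]
    have hv : (j : ℕ) < (i : ℕ) := h
    simp [hv]
  · rw [Fin.succAbove_of_le_castSucc _ _ h]
    have hv : (i : ℕ) ≤ (j : ℕ) := by simpa [Fin.le_def] using h
    rw [Fin.val_succ, if_neg (by omega)]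

lemma emc_step (G : SimpleGraph V) {n : ℕ} (x : Fin (n + 2) → V)
    (hreach : ∀ t : Fin (n + 1), G.Reachable (x t.castSucc) (x t.succ))
    (a : ℕ) (h : a + 1 < n + 2) :
    G.Reachable (x ⟨a, by omega⟩) (x ⟨a + 1, h⟩) := by
  have := hreach ⟨a, by omega⟩
  simpa [Fin.castSucc_mk, Fin.succ_mk] using this

lemma emc_reach2 (G : SimpleGraph V) {n : ℕ} (x : Fin (n + 2) → V)
    (hreach : ∀ t : Fin (n + 1), G.Reachable (x t.castSucc) (x t.succ))
    (a b : ℕ) (hb : b < n + 2) (h1 : a ≤ b) (h2 : b ≤ a + 2) :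
    G.Reachable (x ⟨a, by omega⟩) (x ⟨b, hb⟩) := by
  rcases (by omega : b = a ∨ b = a + 1 ∨ b = a + 2) with rfl | rfl | rfl
  · exact SimpleGraph.Reachable.refl _
  · exact emc_step G x hreach a hb
  · exact (emc_step G x hreach a (by omega)).trans (emc_step G x hreach (a + 1) hb)

lemma emc_reach_comp (G : SimpleGraph V) {n : ℕ} (x : Fin (n + 2) → V)
    (hreach : ∀ t : Fin (n + 1), G.Reachable (x t.castSucc) (x t.succ))
    (i : Fin (n + 2)) (t : Fin n) :
    G.Reachable ((x ∘ i.succAbove) t.castSucc) ((x ∘ i.succAbove) t.succ) := by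
  have ha := emc_val_succAbove i t.castSucc
  have hb := emc_val_succAbove i t.succ
  simp only [Fin.coe_castSucc, Fin.val_succ] at ha hb
  have := emc_reach2 G x hreach (i.succAbove t.castSucc : ℕ) (i.succAbove t.succ : ℕ)
    (Fin.is_lt _) (by rw [ha, hb]; split_ifs <;> omega) (by rw [ha, hb]; split_ifs <;> omega)
  exact this

lemma emc_trailLen_le (G : SimpleGraph V) {n : ℕ} (x : Fin (n + 2) → V)
    (hreach : ∀ t : Fin (n + 1), G.Reachable (x t.castSucc) (x t.succ))
    (i : Fin (n + 2)) (h0 : 0 < (i : ℕ)) (h1 : (i : ℕ) < n + 1) :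
    trailLen G (x ∘ i.succAbove) ≤ trailLen G x := by
  set m := (i : ℕ) with hm
  set X : ℕ → V := fun t => x ⟨min t (n + 1), by omega⟩ with hX
  have hXeq : ∀ (t : ℕ) (h : t < n + 2), x ⟨t, h⟩ = X t := by
    intro t h
    simp only [hX]
    congr 1
    exact Fin.ext (by simp; omega)
  set e : ℕ → ℕ := fun t => G.dist (X t) (X (t + 1)) with he
  set F : ℕ → ℕ := fun t => if t < m then t else t + 1 with hF
  have hx : trailLen G x = ∑ t ∈ Finset.range (n + 1), e t := by
    rw [trailLen]
    rw [show (∑ t : Fin (n + 1), G.dist (x t.castSucc) (x t.succ))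
        = ∑ t : Fin (n + 1), e (t : ℕ) from
      Finset.sum_congr rfl fun t _ => by
        simp only [he]
        rw [show t.castSucc = ⟨(t : ℕ), by omega⟩ from Fin.ext rfl,
          show t.succ = ⟨(t : ℕ) + 1, by omega⟩ from Fin.ext rfl, hXeq, hXeq]]
    exact Fin.sum_univ_eq_sum_range e (n + 1)
  have hy : trailLen G (x ∘ i.succAbove)
      = ∑ t ∈ Finset.range n, G.dist (X (F t)) (X (F (t + 1))) := by
    rw [trailLen]
    rw [show (∑ t : Fin n, G.dist ((x ∘ i.succAbove) t.castSucc) ((x ∘ i.succAbove) t.succ))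
        = ∑ t : Fin n, G.dist (X (F (t : ℕ))) (X (F ((t : ℕ) + 1))) from
      Finset.sum_congr rfl fun t _ => by
        have hFlt : ∀ s : ℕ, s < n + 1 → F s < n + 2 := by
          intro s hs; simp only [hF]; split <;> omega
        have ha : i.succAbove t.castSucc = ⟨F (t : ℕ), hFlt _ (by omega)⟩ := by
          refine Fin.ext ?_
          rw [emc_val_succAbove]
          simp only [Fin.coe_castSucc, hF]
          rfl
        have hb : i.succAbove t.succ = ⟨F ((t : ℕ) + 1), hFlt _ (by omega)⟩ := by
          refine Fin.ext ?_
          rw [emc_val_succAbove]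
          simp only [Fin.val_succ, hF]
          rfl
        simp only [Function.comp_apply, ha, hb, hXeq]]
    exact Fin.sum_univ_eq_sum_range (fun s => G.dist (X (F s)) (X (F (s + 1)))) n
  rw [hx, hy]
  have hg1 : ∀ t, t + 1 < m → G.dist (X (F t)) (X (F (t + 1))) = e t := by
    intro t ht; simp only [hF, he]; rw [if_pos (by omega), if_pos (by omega)]
  have hg3 : ∀ t, m ≤ t → G.dist (X (F t)) (X (F (t + 1))) = e (t + 1) := by
    intro t ht; simp only [hF, he]; rw [if_neg (by omega), if_neg (by omega)]
  have hg2 : G.dist (X (F (m - 1))) (X (F (m - 1 + 1))) ≤ e (m - 1) + e m := by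
    rw [show m - 1 + 1 = m from by omega]
    have hFm1 : F (m - 1) = m - 1 := by simp only [hF]; rw [if_pos (by omega)]
    have hFm : F m = m + 1 := by simp only [hF]; rw [if_neg (by omega)]
    rw [hFm1, hFm]
    have hr1 : G.Reachable (X (m - 1)) (X m) := by
      have := emc_step G x hreach (m - 1) (by omega)
      rwa [hXeq _ (by omega), hXeq _ (by omega), show m - 1 + 1 = m from by omega] at this
    have hr2 : G.Reachable (X m) (X (m + 1)) := by
      have := emc_step G x hreach m (by omega)
      rwa [hXeq _ (by omega), hXeq _ (by omega)] at this
    have tri := emc_dist_tri G hr1 hr2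
    simp only [he]
    rw [show m - 1 + 1 = m from by omega]
    exact tri
  have hA : ∑ t ∈ Finset.range n, G.dist (X (F t)) (X (F (t + 1)))
      = (∑ t ∈ Finset.Ico 0 (m - 1), G.dist (X (F t)) (X (F (t + 1))))
        + ∑ t ∈ Finset.Ico (m - 1) n, G.dist (X (F t)) (X (F (t + 1))) := by
    rw [Finset.range_eq_Ico,
      Finset.sum_Ico_consecutive _ (Nat.zero_le (m - 1)) (show m - 1 ≤ n by omega)]
  have hB : ∑ t ∈ Finset.Ico (m - 1) n, G.dist (X (F t)) (X (F (t + 1)))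
      = G.dist (X (F (m - 1))) (X (F (m - 1 + 1)))
        + ∑ t ∈ Finset.Ico m n, G.dist (X (F t)) (X (F (t + 1))) := by
    rw [Finset.sum_eq_sum_Ico_succ_bot (show m - 1 < n by omega)
      (fun t => G.dist (X (F t)) (X (F (t + 1)))), show m - 1 + 1 = m from by omega]
  have hC : ∑ t ∈ Finset.Ico 0 (m - 1), G.dist (X (F t)) (X (F (t + 1)))
      = ∑ t ∈ Finset.Ico 0 (m - 1), e t :=
    Finset.sum_congr rfl fun t ht => hg1 t (by have := (Finset.mem_Ico.mp ht).2; omega)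
  have hD : ∑ t ∈ Finset.Ico m n, G.dist (X (F t)) (X (F (t + 1)))
      = ∑ t ∈ Finset.Ico (m + 1) (n + 1), e t := by
    rw [Finset.sum_congr rfl fun t ht => hg3 t (Finset.mem_Ico.mp ht).1]
    exact Finset.sum_Ico_add' e m n 1
  have split1 : ∑ t ∈ Finset.range n, G.dist (X (F t)) (X (F (t + 1)))
      = ((∑ t ∈ Finset.Ico 0 (m - 1), e t) + G.dist (X (F (m - 1))) (X (F (m - 1 + 1))))
        + ∑ t ∈ Finset.Ico (m + 1) (n + 1), e t := by
    rw [hA, hB, hC, hD]; ring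
  have split2 : ∑ t ∈ Finset.range (n + 1), e t
      = (((∑ t ∈ Finset.Ico 0 (m - 1), e t) + e (m - 1)) + e m)
        + ∑ t ∈ Finset.Ico (m + 1) (n + 1), e t := by
    rw [Finset.range_eq_Ico,
      ← Finset.sum_Ico_consecutive e (Nat.zero_le (m - 1)) (show m - 1 ≤ n + 1 by omega),
      Finset.sum_eq_sum_Ico_succ_bot (show m - 1 < n + 1 by omega) e,
      show m - 1 + 1 = m from by omega,
      Finset.sum_eq_sum_Ico_succ_bot (show m < n + 1 by omega) e]
    ring
  rw [split1, split2]
  omega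

lemma emc_face_eulerian (G : SimpleGraph V) (k ℓ : ℕ) (x : Fin (k + 3) → V)
    (hx : IsEulerian G ℓ x) (i : Fin (k + 3)) (j : Fin (k + 2))
    (hi0 : 0 < (i : ℕ)) (hi1 : (i : ℕ) < k + 2) (hj0 : 0 < (j : ℕ)) (hj1 : (j : ℕ) < k + 1)
    (hij : IsEulerian G ℓ (x ∘ i.succAbove ∘ j.succAbove)) :
    IsEulerian G ℓ (x ∘ i.succAbove) := by
  obtain ⟨hinj, hre, hlen⟩ := hx
  refine ⟨hinj.comp Fin.succAbove_right_injective, emc_reach_comp G x hre i, ?_⟩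
  have hle1 : trailLen G (x ∘ i.succAbove) ≤ trailLen G x :=
    emc_trailLen_le G x hre i hi0 hi1
  have hle2 : trailLen G ((x ∘ i.succAbove) ∘ j.succAbove) ≤ trailLen G (x ∘ i.succAbove) :=
    emc_trailLen_le G (x ∘ i.succAbove) (emc_reach_comp G x hre i) j hj0 hj1
  have heq : (x ∘ i.succAbove) ∘ j.succAbove = x ∘ i.succAbove ∘ j.succAbove := rfl
  rw [heq] at hle2
  have h3 : trailLen G (x ∘ i.succAbove ∘ j.succAbove) = ℓ := hij.2.2
  omega

open Classical in
noncomputable def emcT (G : SimpleGraph V) (k ℓ : ℕ) (x : Fin (k + 3) → V)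
    (i : Fin (k + 3)) (j : Fin (k + 2)) : EMC G k ℓ :=
  if h : ((0 < (i : ℕ) ∧ (i : ℕ) < k + 2) ∧ (0 < (j : ℕ) ∧ (j : ℕ) < k + 1)) ∧
      IsEulerian G ℓ (x ∘ i.succAbove ∘ j.succAbove) then
    ((-1 : ℤ) ^ ((i : ℕ) + (j : ℕ))) • FreeAbelianGroup.of
      (⟨x ∘ i.succAbove ∘ j.succAbove, h.2⟩ : {y : Fin (k + 1) → V // IsEulerian G ℓ y})
  else 0

lemma emcT_cancel (G : SimpleGraph V) (k ℓ : ℕ) (x : Fin (k + 3) → V)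
    (i : Fin (k + 3)) (j : Fin (k + 2)) (hij : (j : ℕ) < (i : ℕ)) :
    emcT G k ℓ x i j +
      emcT G k ℓ x ⟨(j : ℕ), by have := j.isLt; omega⟩ ⟨(i : ℕ) - 1, by have := i.isLt; omega⟩
      = 0 := by
  classical
  set i' : Fin (k + 3) := ⟨(j : ℕ), by have := j.isLt; omega⟩ with hi'
  set j' : Fin (k + 2) := ⟨(i : ℕ) - 1, by have := i.isLt; omega⟩ with hj'
  have hvi' : (i' : ℕ) = (j : ℕ) := rfl
  have hvj' : (j' : ℕ) = (i : ℕ) - 1 := rfl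
  have hcomp : x ∘ i.succAbove ∘ j.succAbove = x ∘ i'.succAbove ∘ j'.succAbove := by
    funext t
    simp only [Function.comp_apply]
    congr 1
    apply Fin.ext
    rw [emc_val_succAbove, emc_val_succAbove, emc_val_succAbove, emc_val_succAbove]
    simp only [hvi', hvj']
    split_ifs <;> omega
  by_cases hC : ((0 < (i : ℕ) ∧ (i : ℕ) < k + 2) ∧ (0 < (j : ℕ) ∧ (j : ℕ) < k + 1)) ∧
      IsEulerian G ℓ (x ∘ i.succAbove ∘ j.succAbove)
  · have hC' : ((0 < (i' : ℕ) ∧ (i' : ℕ) < k + 2) ∧ (0 < (j' : ℕ) ∧ (j' : ℕ) < k + 1)) ∧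
        IsEulerian G ℓ (x ∘ i'.succAbove ∘ j'.succAbove) := by
      refine ⟨?_, by rw [← hcomp]; exact hC.2⟩
      rw [hvi', hvj']
      obtain ⟨⟨h1, h2⟩, h3, h4⟩ := hC.1
      omega
    rw [emcT, emcT, dif_pos hC, dif_pos hC']
    have hsub : (⟨x ∘ i'.succAbove ∘ j'.succAbove, hC'.2⟩ :
        {y : Fin (k + 1) → V // IsEulerian G ℓ y}) = ⟨x ∘ i.succAbove ∘ j.succAbove, hC.2⟩ :=
      Subtype.ext hcomp.symm
    rw [hsub, ← add_smul]
    convert zero_smul ℤ _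
    have hexp : (i : ℕ) + (j : ℕ) = ((i' : ℕ) + (j' : ℕ)) + 1 := by
      rw [hvi', hvj']; omega
    rw [hexp, pow_succ]
    ring
  · have hC' : ¬ (((0 < (i' : ℕ) ∧ (i' : ℕ) < k + 2) ∧ (0 < (j' : ℕ) ∧ (j' : ℕ) < k + 1)) ∧
        IsEulerian G ℓ (x ∘ i'.succAbove ∘ j'.succAbove)) := by
      intro h
      apply hC
      refine ⟨?_, by rw [hcomp]; exact h.2⟩
      obtain ⟨⟨h1, h2⟩, h3, h4⟩ := h.1
      rw [hvi'] at h1 h2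
      rw [hvj'] at h3 h4
      omega
    rw [emcT, emcT, dif_neg hC, dif_neg hC', add_zero]

def emcInv (k : ℕ) (p : Fin (k + 3) × Fin (k + 2)) : Fin (k + 3) × Fin (k + 2) :=
  if h : (p.2 : ℕ) < (p.1 : ℕ) then
    (⟨(p.2 : ℕ), by have := p.2.isLt; omega⟩, ⟨(p.1 : ℕ) - 1, by have := p.1.isLt; omega⟩)
  else
    (⟨(p.2 : ℕ) + 1, by have := p.2.isLt; omega⟩, ⟨(p.1 : ℕ), by have := p.2.isLt; omega⟩)

lemma emcInv_invol (k : ℕ) (p : Fin (k + 3) × Fin (k + 2)) : emcInv k (emcInv k p) = p := by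
  rcases p with ⟨i, j⟩
  by_cases h : (j : ℕ) < (i : ℕ)
  · have hin : emcInv k (i, j) = (⟨(j : ℕ), by have := j.isLt; omega⟩,
        ⟨(i : ℕ) - 1, by have := i.isLt; omega⟩) := by rw [emcInv]; exact dif_pos h
    rw [hin, emcInv, dif_neg (by simp; omega)]
    refine Prod.ext (Fin.ext ?_) (Fin.ext ?_) <;> simp <;> omega
  · have hin : emcInv k (i, j) = (⟨(j : ℕ) + 1, by have := j.isLt; omega⟩,
        ⟨(i : ℕ), by have h2 := j.isLt; omega⟩) := by rw [emcInv]; exact dif_neg h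
    rw [hin, emcInv, dif_pos (by simp; omega)]
    refine Prod.ext (Fin.ext ?_) (Fin.ext ?_) <;> simp <;> omega

lemma emcInv_ne (k : ℕ) (p : Fin (k + 3) × Fin (k + 2)) : emcInv k p ≠ p := by
  rcases p with ⟨i, j⟩
  intro h
  have hv := congrArg (fun q => ((q.1 : ℕ), (q.2 : ℕ))) h
  by_cases hc : (j : ℕ) < (i : ℕ)
  · rw [emcInv, dif_pos hc] at hv
    simp at hv
    omega
  · rw [emcInv, dif_neg hc] at hv
    simp at hv
    omega

lemma emcT_add_inv (G : SimpleGraph V) (k ℓ : ℕ) (x : Fin (k + 3) → V)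
    (p : Fin (k + 3) × Fin (k + 2)) :
    emcT G k ℓ x p.1 p.2 + emcT G k ℓ x (emcInv k p).1 (emcInv k p).2 = 0 := by
  rcases p with ⟨i, j⟩
  by_cases h : (j : ℕ) < (i : ℕ)
  · rw [emcInv, dif_pos h]
    exact emcT_cancel G k ℓ x i j h
  · rw [emcInv, dif_neg h]
    have := emcT_cancel G k ℓ x ⟨(j : ℕ) + 1, by have := j.isLt; omega⟩
      ⟨(i : ℕ), by have := j.isLt; omega⟩ (by simp; omega)
    simp only at this ⊢
    have e1 : (⟨((⟨(i : ℕ), by have := j.isLt; omega⟩ : Fin (k + 2)) : ℕ), by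
        have := i.isLt; omega⟩ : Fin (k + 3)) = i := Fin.ext rfl
    have e2 : (⟨((⟨(j : ℕ) + 1, by have := j.isLt; omega⟩ : Fin (k + 3)) : ℕ) - 1, by
        have := j.isLt; omega⟩ : Fin (k + 2)) = j := Fin.ext (by simp)
    rw [add_comm]
    convert this using 3
    exact e2.symm

/-- the eulerian magnitude differential squares to zero: for all `k ≥ 2`
and `ℓ ≥ 0`, `∂_{k,ℓ} ∘ ∂_{k+1,ℓ} = 0`.  (Here `bdry G k ℓ` is `∂_{k+1,ℓ}`, so the
composite below is `∂_{k+1,ℓ} ∘ ∂_{k+2,ℓ}` and the hypothesis `2 ≤ k + 1` encodes the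
range of degrees.) -/
theorem bdry_comp_bdry (G : SimpleGraph V) (k ℓ : ℕ) (hk : 2 ≤ k + 1) :
    (bdry G k ℓ).comp (bdry G (k + 1) ℓ) = 0 := by
  classical
  apply FreeAbelianGroup.lift_ext
  intro x
  rw [AddMonoidHom.comp_apply, AddMonoidHom.zero_apply, bdry_of, map_sum]
  have hterm : ∀ i : Fin (k + 3),
      (bdry G k ℓ) (if 0 < (i : ℕ) ∧ (i : ℕ) < k + 2 then
        (if h : IsEulerian G ℓ (x.1 ∘ i.succAbove) then
          ((-1 : ℤ) ^ (i : ℕ)) • FreeAbelianGroup.of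
            (⟨x.1 ∘ i.succAbove, h⟩ : {y : Fin (k + 2) → V // IsEulerian G ℓ y})
        else 0) else 0)
      = ∑ j : Fin (k + 2), emcT G k ℓ x.1 i j := by
    intro i
    by_cases hPi : 0 < (i : ℕ) ∧ (i : ℕ) < k + 2
    · rw [if_pos hPi]
      by_cases hEi : IsEulerian G ℓ (x.1 ∘ i.succAbove)
      · rw [dif_pos hEi, map_zsmul, bdry_of, Finset.smul_sum]
        refine Finset.sum_congr rfl fun j _ => ?_
        by_cases hQj : 0 < (j : ℕ) ∧ (j : ℕ) < k + 1
        · rw [if_pos hQj]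
          by_cases hEij : IsEulerian G ℓ ((x.1 ∘ i.succAbove) ∘ j.succAbove)
          · rw [dif_pos hEij, emcT, dif_pos ⟨⟨hPi, hQj⟩, hEij⟩, smul_smul, ← pow_add]
            rfl
          · rw [dif_neg hEij, smul_zero, emcT, dif_neg (fun h => hEij h.2)]
        · rw [if_neg hQj, smul_zero, emcT, dif_neg (fun h => hQj h.1.2)]
      · rw [dif_neg hEi, map_zero]
        symm
        refine Finset.sum_eq_zero fun j _ => ?_
        rw [emcT]
        refine dif_neg fun h => hEi ?_
        exact emc_face_eulerian G k ℓ x.1 x.2 i j hPi.1 hPi.2 h.1.2.1 h.1.2.2 h.2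
    · rw [if_neg hPi, map_zero]
      symm
      exact Finset.sum_eq_zero fun j _ => by rw [emcT]; exact dif_neg fun h => hPi h.1.1
  rw [Finset.sum_congr rfl fun i _ => hterm i, ← Fintype.sum_prod_type']
  exact Finset.sum_ninvolution (emcInv k) (emcT_add_inv G k ℓ x.1)
    (fun p _ => emcInv_ne k p) (fun p => Finset.mem_univ _) (emcInv_invol k)
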